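/- For u ∈ H²(ℝ), the second difference of grid values is bounded by the second derivative: Δx Σ_j (D₊D₋u(x_j))² ≤ ‖u''‖²_{L²(ℝ)}. -/

import Mathlib

open MeasureTheory Set

/-- weighted Cauchy–Schwarz inequality on a set. -/
lemma wCS {s : Set ℝ} (hs : MeasurableSet s) (f w : ℝ → ℝ)
    (hw0 : ∀ x ∈ s, 0 ≤ w x)
    (hw : IntegrableOn w s)
    (hfw : IntegrableOn (fun x => f x * w x) s)
    (hf2w : IntegrableOn (fun x => f x ^ 2 * w x) s) :
    (∫ x in s, f x * w x) ^ 2 ≤ (∫ x in s, w x) * ∫ x in s, f x ^ 2 * w x := by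
  set W := ∫ x in s, w x with hW
  set I := ∫ x in s, f x * w x with hI
  set J := ∫ x in s, f x ^ 2 * w x with hJ
  have hw0' : ∀ᵐ x ∂(volume.restrict s), 0 ≤ w x :=
    (ae_restrict_iff' hs).2 (Filter.Eventually.of_forall hw0)
  have hWnn : 0 ≤ W := integral_nonneg_of_ae hw0'
  have hJnn : 0 ≤ J := integral_nonneg_of_ae (hw0'.mono fun x hx => mul_nonneg (sq_nonneg _) hx)
  have hkey : 0 ≤ W ^ 2 * J - (2 * W * I) * I + I ^ 2 * W := by
    have h1 : 0 ≤ ∫ x in s, (W * f x - I) ^ 2 * w x :=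
      integral_nonneg_of_ae (hw0'.mono fun x hx => mul_nonneg (sq_nonneg _) hx)
    have h2 : ∫ x in s, (W * f x - I) ^ 2 * w x
        = W ^ 2 * J - (2 * W * I) * I + I ^ 2 * W := by
      have e : ∀ x, (W * f x - I) ^ 2 * w x
          = (W ^ 2 * (f x ^ 2 * w x) - 2 * W * I * (f x * w x)) + I ^ 2 * w x := fun x => by
        ring
      have i1 : Integrable (fun x => W ^ 2 * (f x ^ 2 * w x)) (volume.restrict s) :=
        hf2w.const_mul (W ^ 2)
      have i2 : Integrable (fun x => 2 * W * I * (f x * w x)) (volume.restrict s) :=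
        hfw.const_mul (2 * W * I)
      have i3 : Integrable (fun x => I ^ 2 * w x) (volume.restrict s) := hw.const_mul (I ^ 2)
      have i12 : Integrable (fun x => W ^ 2 * (f x ^ 2 * w x) - 2 * W * I * (f x * w x))
          (volume.restrict s) := i1.sub i2
      rw [integral_congr_ae (Filter.Eventually.of_forall e),
        integral_add i12 i3, integral_sub i1 i2,
        integral_const_mul, integral_const_mul, integral_const_mul]
    rw [h2] at h1
    linarith
  rcases eq_or_lt_of_le hWnn with hW0 | hWpos
  · have hw0'' : w =ᵐ[volume.restrict s] 0 :=
      (integral_eq_zero_iff_of_nonneg_ae hw0' hw).1 hW0.symm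
    have hfw0 : (fun x => f x * w x) =ᵐ[volume.restrict s] 0 :=
      hw0''.mono fun x hx => by simp [hx]
    have hI0 : I = 0 := by rw [hI, integral_congr_ae hfw0]; simp
    rw [hI0, ← hW0]
    simpa using hJnn
  · have h3 : W * I ^ 2 ≤ W * (W * J) := by nlinarith
    exact le_of_mul_le_mul_left h3 hWpos

/-- product of a locally integrable function with a continuous one is locally integrable. -/
lemma mulcont_integrableOn {F G : ℝ → ℝ} (hF : ∀ p q : ℝ, IntegrableOn F (Ioc p q))
    (hG : Continuous G) (p q : ℝ) : IntegrableOn (fun x => F x * G x) (Ioc p q) := by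
  obtain ⟨C, hC⟩ : ∃ C, ∀ x ∈ Icc p q, ‖G x‖ ≤ C :=
    isCompact_Icc.exists_bound_of_continuousOn hG.continuousOn
  have h1 : Integrable (fun x => G x * F x) (volume.restrict (Ioc p q)) :=
    (hF p q).bdd_mul (c := C) hG.aestronglyMeasurable.restrict
      ((ae_restrict_iff' measurableSet_Ioc).2
        (Filter.Eventually.of_forall fun x hx => hC x (Ioc_subset_Icc_self hx)))
  exact h1.congr (Filter.Eventually.of_forall fun x => mul_comm _ _)

lemma intervalIntegrable_of_loc {F : ℝ → ℝ} (hF : ∀ p q : ℝ, IntegrableOn F (Ioc p q))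
    (p q : ℝ) : IntervalIntegrable F volume p q := by
  rcases le_total p q with hpq | hpq
  · exact (intervalIntegrable_iff_integrableOn_Ioc_of_le hpq).2 (hF p q)
  · exact ((intervalIntegrable_iff_integrableOn_Ioc_of_le hpq).2 (hF q p)).symm

/-- The key per-interval bound. -/
lemma keybound (h : ℝ) (hh : 0 < h) (u u' u'' : ℝ → ℝ)
    (hu' : ∀ x, HasDerivAt u (u' x) x) (hu'' : ∀ x, HasDerivAt u' (u'' x) x)
    (hu''loc : ∀ a c : ℝ, IntegrableOn u'' (Ioc a c))
    (hg2loc : ∀ a c : ℝ, IntegrableOn (fun x => u'' x ^ 2) (Ioc a c))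
    (b : ℝ) :
    ((u (b + h) - 2 * u b + u (b - h)) / h ^ 2) ^ 2 ≤
      (1 / h ^ 2) * ((∫ x in Ioc (b - h) b, u'' x ^ 2 * (x - (b - h)))
        + ∫ x in Ioc b (b + h), u'' x ^ 2 * ((b + h) - x)) := by
  have hne : h ≠ 0 := hh.ne'
  set a := b - h with ha
  set c := b + h with hc
  have hab : a < b := by rw [ha]; linarith
  have hbc : b < c := by rw [hc]; linarith
  have hac : a ≤ c := le_of_lt (hab.trans hbc)
  set w : ℝ → ℝ := fun x => h - |x - b| with hwdef
  have hwc : Continuous w := continuous_const.sub ((continuous_id.sub continuous_const).abs)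
  have hu'd : Differentiable ℝ u' := fun x => (hu'' x).differentiableAt
  have hu'c : Continuous u' := hu'd.continuous
  have hu''ii := intervalIntegrable_of_loc hu''loc
  -- integration by parts on [a, b]
  have ibp1 : ∫ x in a..b, u'' x * (x - a) = h * u' b - (u b - u a) := by
    have h1 : ∫ x in a..b, u'' x * (x - a) = ∫ x in a..b, (x - a) * u'' x :=
      intervalIntegral.integral_congr fun x _ => mul_comm _ _
    have h2 := intervalIntegral.integral_mul_deriv_eq_deriv_mul
      (u := fun x => x - a) (u' := fun _ => (1 : ℝ)) (v := u') (v' := u'') (a := a) (b := b)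
      (fun x _ => (hasDerivAt_id x).sub_const a) (fun x _ => hu'' x)
      intervalIntegrable_const (hu''ii a b)
    have h3 : ∫ x in a..b, u' x = u b - u a :=
      intervalIntegral.integral_eq_sub_of_hasDerivAt (fun x _ => hu' x)
        (hu'c.intervalIntegrable a b)
    simp only [one_mul, sub_self, zero_mul, sub_zero] at h2
    rw [h1, h2, h3, ha]
    ring
  -- integration by parts on [b, c]
  have ibp2 : ∫ x in b..c, u'' x * (c - x) = (u c - u b) - h * u' b := by
    have h1 : ∫ x in b..c, u'' x * (c - x) = ∫ x in b..c, (c - x) * u'' x :=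
      intervalIntegral.integral_congr fun x _ => mul_comm _ _
    have h2 := intervalIntegral.integral_mul_deriv_eq_deriv_mul
      (u := fun x => c - x) (u' := fun _ => (-1 : ℝ)) (v := u') (v' := u'') (a := b) (b := c)
      (fun x _ => (hasDerivAt_id x).const_sub c) (fun x _ => hu'' x)
      intervalIntegrable_const (hu''ii b c)
    have h3 : ∫ x in b..c, u' x = u c - u b :=
      intervalIntegral.integral_eq_sub_of_hasDerivAt (fun x _ => hu' x)
        (hu'c.intervalIntegrable b c)
    simp only [neg_one_mul, sub_self, zero_mul, intervalIntegral.integral_neg] at h2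
    rw [h1, h2, h3, hc]
    ring
  -- congruence of the weight on the two halves
  have e1 : EqOn (fun x => u'' x * w x) (fun x => u'' x * (x - a)) (Set.uIcc a b) := by
    intro x hx
    rw [uIcc_of_le hab.le] at hx
    have hxb : x ≤ b := hx.2
    have : |x - b| = b - x := by rw [abs_of_nonpos (by linarith)]; ring
    simp only [hwdef, this, ha]
    ring
  have e2 : EqOn (fun x => u'' x * w x) (fun x => u'' x * (c - x)) (Set.uIcc b c) := by
    intro x hx
    rw [uIcc_of_le hbc.le] at hx
    have hxb : b ≤ x := hx.1
    have : |x - b| = x - b := abs_of_nonneg (by linarith)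
    simp only [hwdef, this, hc]
    ring
  have hiwloc : ∀ p q : ℝ, IntegrableOn (fun x => u'' x * w x) (Ioc p q) :=
    mulcont_integrableOn hu''loc hwc
  have hiw := intervalIntegrable_of_loc hiwloc
  -- the identity
  have hid : ∫ x in a..c, u'' x * w x = u c - 2 * u b + u a := by
    rw [← intervalIntegral.integral_add_adjacent_intervals (hiw a b) (hiw b c),
      intervalIntegral.integral_congr e1, intervalIntegral.integral_congr e2, ibp1, ibp2]
    ring
  -- the weight integrates to h^2
  have e1w : EqOn w (fun x => x - a) (Set.uIcc a b) := by
    intro x hx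
    rw [uIcc_of_le hab.le] at hx
    have : |x - b| = b - x := by rw [abs_of_nonpos (by linarith [hx.2])]; ring
    simp only [hwdef, this, ha]
    ring
  have e2w : EqOn w (fun x => c - x) (Set.uIcc b c) := by
    intro x hx
    rw [uIcc_of_le hbc.le] at hx
    have : |x - b| = x - b := abs_of_nonneg (by linarith [hx.1])
    simp only [hwdef, this, hc]
    ring
  have hWval : ∫ x in Ioc a c, w x = h ^ 2 := by
    rw [← intervalIntegral.integral_of_le hac,
      ← intervalIntegral.integral_add_adjacent_intervals
        (hwc.intervalIntegrable a b) (hwc.intervalIntegrable b c),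
      intervalIntegral.integral_congr e1w, intervalIntegral.integral_congr e2w]
    have p1 : ∫ x in a..b, (x - a) = h ^ 2 / 2 := by
      rw [intervalIntegral.integral_sub (intervalIntegral.intervalIntegrable_id)
        intervalIntegrable_const, integral_id, intervalIntegral.integral_const,
        ha]
      simp only [smul_eq_mul]
      ring
    have p2 : ∫ x in b..c, (c - x) = h ^ 2 / 2 := by
      rw [intervalIntegral.integral_sub intervalIntegrable_const
        intervalIntegral.intervalIntegrable_id, integral_id,
        intervalIntegral.integral_const, hc]
      simp only [smul_eq_mul]
      ring
    rw [p1, p2]; ring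
  -- Cauchy–Schwarz
  have hw0s : ∀ x ∈ Ioc a c, 0 ≤ w x := by
    intro x hx
    have h1 : a < x := hx.1
    have h2 : x ≤ c := hx.2
    have : |x - b| ≤ h := abs_le.2 ⟨by rw [ha] at h1; linarith, by rw [hc] at h2; linarith⟩
    simp only [hwdef]; linarith
  have hCS := wCS measurableSet_Ioc u'' w hw0s (hwc.integrableOn_Ioc)
    (hiwloc a c) (mulcont_integrableOn hg2loc hwc a c)
  rw [hWval] at hCS
  have hIeq : ∫ x in Ioc a c, u'' x * w x = u c - 2 * u b + u a := by
    rw [← intervalIntegral.integral_of_le hac]; exact hid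
  rw [hIeq] at hCS
  -- split the quadratic weight integral
  have hsplit : ∫ x in Ioc a c, u'' x ^ 2 * w x
      = (∫ x in Ioc a b, u'' x ^ 2 * (x - a)) + ∫ x in Ioc b c, u'' x ^ 2 * ((c - x)) := by
    have hu : Ioc a c = Ioc a b ∪ Ioc b c := (Ioc_union_Ioc_eq_Ioc hab.le hbc.le).symm
    rw [hu, setIntegral_union (Ioc_disjoint_Ioc_of_le le_rfl) measurableSet_Ioc
      (mulcont_integrableOn hg2loc hwc a b) (mulcont_integrableOn hg2loc hwc b c)]
    congr 1
    · exact setIntegral_congr_fun measurableSet_Ioc fun x hx =>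
        e1w (Ioc_subset_Icc_self.trans (Icc_subset_uIcc) hx) ▸ rfl
    · exact setIntegral_congr_fun measurableSet_Ioc fun x hx =>
        e2w (Ioc_subset_Icc_self.trans (Icc_subset_uIcc) hx) ▸ rfl
  rw [hsplit] at hCS
  -- conclude
  have hD2 : (u c - 2 * u b + u a) ^ 2
      ≤ h ^ 2 * ((∫ x in Ioc a b, u'' x ^ 2 * (x - a)) + ∫ x in Ioc b c, u'' x ^ 2 * (c - x)) :=
    hCS.trans_eq (by ring)
  have harg : u (b + h) - 2 * u b + u (b - h) = u c - 2 * u b + u a := by rw [ha, hc]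
  rw [harg, div_pow]
  rw [div_le_iff₀ (by positivity)]
  calc (u c - 2 * u b + u a) ^ 2
      ≤ h ^ 2 * ((∫ x in Ioc a b, u'' x ^ 2 * (x - a)) + ∫ x in Ioc b c, u'' x ^ 2 * (c - x)) :=
        hD2
    _ = 1 / h ^ 2 * ((∫ x in Ioc a b, u'' x ^ 2 * (x - a))
          + ∫ x in Ioc b c, u'' x ^ 2 * (c - x)) * (h ^ 2) ^ 2 := by
        field_simp

theorem stmt_14 (Δx : ℝ) (hΔx : 0 < Δx) (u u' u'' : ℝ → ℝ)
    (hu' : ∀ x, HasDerivAt u (u' x) x) (hu'' : ∀ x, HasDerivAt u' (u'' x) x)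
    (hu2 : MemLp u 2 volume) (hu'2 : MemLp u' 2 volume) (hu''2 : MemLp u'' 2 volume) :
    Δx * ∑' j : ℤ, ((u ((j + 1) * Δx) - 2 * u (j * Δx) + u ((j - 1) * Δx)) / Δx ^ 2) ^ 2
      ≤ ∫ x : ℝ, (u'' x) ^ 2 := by
  have hne : Δx ≠ 0 := hΔx.ne'
  have hg : Integrable (fun x => u'' x ^ 2) volume := hu''2.integrable_sq
  have hu''loc : ∀ a c : ℝ, IntegrableOn u'' (Ioc a c) := by
    intro a c
    haveI : IsFiniteMeasure (volume.restrict (Ioc a c)) := by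
      constructor
      rw [Measure.restrict_apply_univ]
      exact measure_Ioc_lt_top
    exact memLp_one_iff_integrable.mp ((hu''2.restrict _).mono_exponent (by norm_num))
  have hg2loc : ∀ a c : ℝ, IntegrableOn (fun x => u'' x ^ 2) (Ioc a c) :=
    fun a c => hg.integrableOn
  set A : ℤ → ℝ := fun j =>
    ∫ x in Ioc ((j : ℝ) * Δx) ((j : ℝ) * Δx + Δx), u'' x ^ 2 * (((j : ℝ) * Δx + Δx) - x)
    with hAdef
  set B : ℤ → ℝ := fun j =>
    ∫ x in Ioc ((j : ℝ) * Δx - Δx) ((j : ℝ) * Δx), u'' x ^ 2 * (x - ((j : ℝ) * Δx - Δx))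
    with hBdef
  set P : ℤ → ℝ := fun j => ∫ x in Ioc ((j : ℝ) * Δx) ((j : ℝ) * Δx + Δx), u'' x ^ 2 with hPdef
  -- the partition sum
  have hsum : HasSum P (∫ x : ℝ, u'' x ^ 2) := by
    have e : (fun j : ℤ => Ioc ((j • Δx : ℝ)) ((j + 1) • Δx))
        = fun j : ℤ => Ioc ((j : ℝ) * Δx) ((j : ℝ) * Δx + Δx) := by
      funext j
      rw [zsmul_eq_mul, zsmul_eq_mul]
      push_cast
      congr 1 <;> ring
    have hU : (⋃ j : ℤ, Ioc ((j • Δx : ℝ)) ((j + 1) • Δx)) = univ := iUnion_Ioc_zsmul hΔx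
    have h1 := hasSum_integral_iUnion (μ := volume)
      (s := fun j : ℤ => Ioc ((j • Δx : ℝ)) ((j + 1) • Δx)) (f := fun x => u'' x ^ 2)
      (fun _ => measurableSet_Ioc) (pairwise_disjoint_Ioc_zsmul Δx)
      (by rw [hU]; exact hg.integrableOn)
    rw [hU, Measure.restrict_univ] at h1
    have e' := congrArg (fun S : ℤ → Set ℝ => fun j => ∫ x in S j, u'' x ^ 2) e
    rw [e'] at h1
    exact h1
  -- relation between A, B and P
  have hABP : ∀ j : ℤ, A j + B (j + 1) = Δx * P j := by
    intro j
    have eB : B (j + 1) = ∫ x in Ioc ((j : ℝ) * Δx) ((j : ℝ) * Δx + Δx),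
        u'' x ^ 2 * (x - (j : ℝ) * Δx) := by
      rw [hBdef]
      push_cast
      rw [show ((j : ℝ) + 1) * Δx - Δx = (j : ℝ) * Δx from by ring,
        show ((j : ℝ) + 1) * Δx = (j : ℝ) * Δx + Δx from by ring]
    rw [eB, hAdef, hPdef]
    have hi1 : IntegrableOn (fun x => u'' x ^ 2 * (((j : ℝ) * Δx + Δx) - x))
        (Ioc ((j : ℝ) * Δx) ((j : ℝ) * Δx + Δx)) :=
      mulcont_integrableOn hg2loc (continuous_const.sub continuous_id) _ _
    have hi2 : IntegrableOn (fun x => u'' x ^ 2 * (x - (j : ℝ) * Δx))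
        (Ioc ((j : ℝ) * Δx) ((j : ℝ) * Δx + Δx)) :=
      mulcont_integrableOn hg2loc (continuous_id.sub continuous_const) _ _
    rw [← integral_add hi1 hi2]
    rw [show (fun x => u'' x ^ 2 * (((j : ℝ) * Δx + Δx) - x) + u'' x ^ 2 * (x - (j : ℝ) * Δx))
        = fun x => Δx * u'' x ^ 2 from by funext x; ring]
    exact integral_const_mul _ _
  -- nonnegativity
  have hAnn : ∀ j : ℤ, 0 ≤ A j := by
    intro j
    rw [hAdef]
    refine setIntegral_nonneg measurableSet_Ioc fun x hx => mul_nonneg (sq_nonneg _) ?_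
    have := hx.2; linarith
  have hBnn : ∀ j : ℤ, 0 ≤ B j := by
    intro j
    rw [hBdef]
    refine setIntegral_nonneg measurableSet_Ioc fun x hx => mul_nonneg (sq_nonneg _) ?_
    have := hx.1; linarith
  -- summability
  have hsumR : HasSum (fun j : ℤ => A j + B (j + 1)) (Δx * ∫ x : ℝ, u'' x ^ 2) := by
    have := hsum.mul_left Δx
    exact this.congr_fun fun j => (hABP j).symm ▸ rfl
  have SR : Summable (fun j : ℤ => A j + B (j + 1)) := hsumR.summable
  have SA : Summable A :=
    Summable.of_nonneg_of_le hAnn (fun j => le_add_of_nonneg_right (hBnn (j + 1))) SR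
  have SB1 : Summable (fun j : ℤ => B (j + 1)) :=
    Summable.of_nonneg_of_le (fun j => hBnn (j + 1)) (fun j => le_add_of_nonneg_left (hAnn j)) SR
  have SB : Summable B := by
    have : (fun j : ℤ => B (j + 1)) = B ∘ (Equiv.addRight (1 : ℤ)) := rfl
    rw [this] at SB1
    exact (Equiv.addRight (1 : ℤ)).summable_iff.mp SB1
  have tsumB : ∑' j : ℤ, B (j + 1) = ∑' j : ℤ, B j := (Equiv.addRight (1 : ℤ)).tsum_eq B
  -- the per-term bound
  have hbound : ∀ j : ℤ,
      ((u ((j + 1) * Δx) - 2 * u (j * Δx) + u ((j - 1) * Δx)) / Δx ^ 2) ^ 2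
        ≤ (1 / Δx ^ 2) * (B j + A j) := by
    intro j
    have hk := keybound Δx hΔx u u' u'' hu' hu'' hu''loc hg2loc ((j : ℝ) * Δx)
    rw [show ((j : ℝ) + 1) * Δx = (j : ℝ) * Δx + Δx from by ring,
      show ((j : ℝ) - 1) * Δx = (j : ℝ) * Δx - Δx from by ring]
    rw [hBdef, hAdef]
    exact hk
  have Sbd : Summable (fun j : ℤ => (1 / Δx ^ 2) * (B j + A j)) := (SB.add SA).mul_left _
  have St : Summable (fun j : ℤ =>
      ((u ((j + 1) * Δx) - 2 * u (j * Δx) + u ((j - 1) * Δx)) / Δx ^ 2) ^ 2) :=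
    Summable.of_nonneg_of_le (fun j => sq_nonneg _) hbound Sbd
  -- final computation
  have step1 : ∑' j : ℤ, ((u ((j + 1) * Δx) - 2 * u (j * Δx) + u ((j - 1) * Δx)) / Δx ^ 2) ^ 2
      ≤ ∑' j : ℤ, (1 / Δx ^ 2) * (B j + A j) := Summable.tsum_le_tsum hbound St Sbd
  have step2 : ∑' j : ℤ, (1 / Δx ^ 2) * (B j + A j)
      = (1 / Δx ^ 2) * (Δx * ∫ x : ℝ, u'' x ^ 2) := by
    rw [tsum_mul_left, Summable.tsum_add SB SA, ← tsumB, add_comm (∑' j : ℤ, B (j + 1)) _,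
      ← Summable.tsum_add SA SB1, hsumR.tsum_eq]
  calc Δx * ∑' j : ℤ, ((u ((j + 1) * Δx) - 2 * u (j * Δx) + u ((j - 1) * Δx)) / Δx ^ 2) ^ 2
      ≤ Δx * ((1 / Δx ^ 2) * (Δx * ∫ x : ℝ, u'' x ^ 2)) := by
        rw [← step2]
        exact mul_le_mul_of_nonneg_left step1 hΔx.le
    _ = ∫ x : ℝ, u'' x ^ 2 := by field_simp
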